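/- Let n ≥ 1, let φ, ψ : ℝⁿ → ℝ be twice continuously differentiable functions satisfying the eikonal equations Σᵢ (∂ᵢψ)² = Σᵢ (∂ᵢφ)² and Σᵢ ∂ᵢφ ∂ᵢψ = 0 everywhere, let h > 0, and let u : ℝⁿ → ℂ be twice continuously differentiable. Then for every x ∈ ℝⁿ, e^{−(φ(x)+iψ(x))/h} · h² Δ( e^{(φ+iψ)/h} u )(x) = h² Δu(x) + 2h (T u)(x), where T u := Σᵢ (∂ᵢφ + i ∂ᵢψ) ∂ᵢu + (1/2)(Δφ + iΔψ) u, and Δf := Σᵢ ∂ᵢ∂ᵢ f is the Laplacian. -/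

import Mathlib

/-- The `i`-th partial derivative of a complex-valued function on `ℝⁿ`. -/
noncomputable def pderivC (n : ℕ) (f : EuclideanSpace ℝ (Fin n) → ℂ) (i : Fin n)
    (x : EuclideanSpace ℝ (Fin n)) : ℂ :=
  fderiv ℝ f x (EuclideanSpace.single i 1)

/-- The `i`-th partial derivative of a real-valued function on `ℝⁿ`. -/
noncomputable def pderivR (n : ℕ) (f : EuclideanSpace ℝ (Fin n) → ℝ) (i : Fin n)
    (x : EuclideanSpace ℝ (Fin n)) : ℝ :=
  fderiv ℝ f x (EuclideanSpace.single i 1)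

/-- The Laplacian `Δf = Σᵢ ∂ᵢ∂ᵢ f` of a complex-valued function on `ℝⁿ`. -/
noncomputable def laplacianC (n : ℕ) (f : EuclideanSpace ℝ (Fin n) → ℂ)
    (x : EuclideanSpace ℝ (Fin n)) : ℂ :=
  ∑ i : Fin n, pderivC n (pderivC n f i) i x

/-- The Laplacian `Δf = Σᵢ ∂ᵢ∂ᵢ f` of a real-valued function on `ℝⁿ`. -/
noncomputable def laplacianR (n : ℕ) (f : EuclideanSpace ℝ (Fin n) → ℝ)
    (x : EuclideanSpace ℝ (Fin n)) : ℝ :=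
  ∑ i : Fin n, pderivR n (pderivR n f i) i x

/-- The transport operator `T u = (∇φ + i∇ψ)·∇u + (1/2)(Δφ + iΔψ) u`. -/
noncomputable def transportT (n : ℕ) (φ ψ : EuclideanSpace ℝ (Fin n) → ℝ)
    (u : EuclideanSpace ℝ (Fin n) → ℂ) (x : EuclideanSpace ℝ (Fin n)) : ℂ :=
  ∑ i : Fin n, ((pderivR n φ i x : ℂ) + Complex.I * (pderivR n ψ i x : ℂ)) * pderivC n u i x
    + (1 / 2) * ((laplacianR n φ x : ℂ) + Complex.I * (laplacianR n ψ x : ℂ)) * u x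

section Aux

variable {n : ℕ}

lemma pderivC_eq {f : EuclideanSpace ℝ (Fin n) → ℂ} {f' : EuclideanSpace ℝ (Fin n) →L[ℝ] ℂ}
    {x : EuclideanSpace ℝ (Fin n)} (hf : HasFDerivAt f f' x) (i : Fin n) :
    pderivC n f i x = f' (EuclideanSpace.single i 1) := by
  rw [pderivC, hf.fderiv]

lemma contDiff_pderivC {f : EuclideanSpace ℝ (Fin n) → ℂ} (hf : ContDiff ℝ 2 f) (i : Fin n) :
    ContDiff ℝ 1 (pderivC n f i) :=
  (hf.fderiv_right (by norm_num)).clm_apply contDiff_const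

lemma contDiff_pderivR {f : EuclideanSpace ℝ (Fin n) → ℝ} (hf : ContDiff ℝ 2 f) (i : Fin n) :
    ContDiff ℝ 1 (pderivR n f i) :=
  (hf.fderiv_right (by norm_num)).clm_apply contDiff_const

lemma hasFDerivAt_pair {f g : EuclideanSpace ℝ (Fin n) → ℝ} {x : EuclideanSpace ℝ (Fin n)}
    (hf : DifferentiableAt ℝ f x) (hg : DifferentiableAt ℝ g x) (c : ℂ) :
    HasFDerivAt (fun y => (((f y : ℂ)) + Complex.I * (g y : ℂ)) / c)
      ((1/c) • (Complex.ofRealCLM.comp (fderiv ℝ f x)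
        + Complex.I • Complex.ofRealCLM.comp (fderiv ℝ g x))) x := by
  have h1 : HasFDerivAt (fun y => ((f y : ℂ))) (Complex.ofRealCLM.comp (fderiv ℝ f x)) x :=
    Complex.ofRealCLM.hasFDerivAt.comp x hf.hasFDerivAt
  have h2 : HasFDerivAt (fun y => Complex.I * ((g y : ℂ)))
      (Complex.I • Complex.ofRealCLM.comp (fderiv ℝ g x)) x :=
    (Complex.ofRealCLM.hasFDerivAt.comp x hg.hasFDerivAt).const_mul Complex.I
  have h3 := (h1.add h2).const_mul c⁻¹
  simp only [div_eq_inv_mul, one_div]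
  simpa using h3

lemma pderivC_pair {f g : EuclideanSpace ℝ (Fin n) → ℝ} {x : EuclideanSpace ℝ (Fin n)}
    (hf : DifferentiableAt ℝ f x) (hg : DifferentiableAt ℝ g x) (c : ℂ) (i : Fin n) :
    pderivC n (fun y => (((f y : ℂ)) + Complex.I * (g y : ℂ)) / c) i x
      = (((pderivR n f i x : ℂ)) + Complex.I * (pderivR n g i x : ℂ)) / c := by
  rw [pderivC_eq (hasFDerivAt_pair hf hg c) i]
  simp only [ContinuousLinearMap.smul_apply, ContinuousLinearMap.add_apply,
    ContinuousLinearMap.comp_apply, Complex.ofRealCLM_apply, pderivR, smul_eq_mul]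
  ring

lemma pderivC_mul {f g : EuclideanSpace ℝ (Fin n) → ℂ} {x : EuclideanSpace ℝ (Fin n)}
    (hf : DifferentiableAt ℝ f x) (hg : DifferentiableAt ℝ g x) (i : Fin n) :
    pderivC n (fun y => f y * g y) i x = pderivC n f i x * g x + f x * pderivC n g i x := by
  rw [pderivC_eq (f := fun y => f y * g y) (hf.hasFDerivAt.mul hg.hasFDerivAt) i]
  simp only [ContinuousLinearMap.add_apply, ContinuousLinearMap.smul_apply, smul_eq_mul, pderivC]
  ring

lemma pderivC_add {f g : EuclideanSpace ℝ (Fin n) → ℂ} {x : EuclideanSpace ℝ (Fin n)}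
    (hf : DifferentiableAt ℝ f x) (hg : DifferentiableAt ℝ g x) (i : Fin n) :
    pderivC n (fun y => f y + g y) i x = pderivC n f i x + pderivC n g i x := by
  rw [pderivC_eq (f := fun y => f y + g y) (hf.hasFDerivAt.add hg.hasFDerivAt) i]; simp [pderivC]

lemma pderivC_exp {f : EuclideanSpace ℝ (Fin n) → ℂ} {x : EuclideanSpace ℝ (Fin n)}
    (hf : DifferentiableAt ℝ f x) (i : Fin n) :
    pderivC n (fun y => Complex.exp (f y)) i x = Complex.exp (f x) * pderivC n f i x := by
  rw [pderivC_eq (hf.hasFDerivAt.cexp) i]; simp [pderivC]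

lemma second_deriv_formula {φ ψ : EuclideanSpace ℝ (Fin n) → ℝ}
    (hφ : ContDiff ℝ 2 φ) (hψ : ContDiff ℝ 2 ψ) {h : ℝ}
    {u : EuclideanSpace ℝ (Fin n) → ℂ} (hu : ContDiff ℝ 2 u) (i : Fin n)
    (x : EuclideanSpace ℝ (Fin n)) :
    pderivC n (pderivC n
      (fun y => Complex.exp (((φ y : ℂ) + Complex.I * (ψ y : ℂ)) / (h : ℂ)) * u y) i) i x
    = Complex.exp (((φ x : ℂ) + Complex.I * (ψ x : ℂ)) / (h : ℂ)) *
      ( (((pderivR n φ i x : ℂ) + Complex.I * (pderivR n ψ i x : ℂ)) / (h : ℂ)) ^ 2 * u x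
      + (((pderivR n (pderivR n φ i) i x : ℂ)
          + Complex.I * (pderivR n (pderivR n ψ i) i x : ℂ)) / (h : ℂ)) * u x
      + 2 * (((pderivR n φ i x : ℂ) + Complex.I * (pderivR n ψ i x : ℂ)) / (h : ℂ))
          * pderivC n u i x
      + pderivC n (pderivC n u i) i x ) := by
  have hφ1 : Differentiable ℝ φ := hφ.differentiable two_ne_zero
  have hψ1 : Differentiable ℝ ψ := hψ.differentiable two_ne_zero
  have hu1 : Differentiable ℝ u := hu.differentiable two_ne_zero
  have hφi : Differentiable ℝ (pderivR n φ i) := (contDiff_pderivR hφ i).differentiable one_ne_zero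
  have hψi : Differentiable ℝ (pderivR n ψ i) := (contDiff_pderivR hψ i).differentiable one_ne_zero
  have hui : Differentiable ℝ (pderivC n u i) := (contDiff_pderivC hu i).differentiable one_ne_zero
  have hw : Differentiable ℝ (fun y => ((φ y : ℂ) + Complex.I * (ψ y : ℂ)) / (h : ℂ)) :=
    fun y => (hasFDerivAt_pair (hφ1 y) (hψ1 y) (h : ℂ)).differentiableAt
  have hdw : Differentiable ℝ
      (fun y => ((pderivR n φ i y : ℂ) + Complex.I * (pderivR n ψ i y : ℂ)) / (h : ℂ)) :=
    fun y => (hasFDerivAt_pair (hφi y) (hψi y) (h : ℂ)).differentiableAt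
  have hexp : Differentiable ℝ
      (fun y => Complex.exp (((φ y : ℂ) + Complex.I * (ψ y : ℂ)) / (h : ℂ))) :=
    fun y => ((hw y).hasFDerivAt.cexp).differentiableAt
  have hA : pderivC n
      (fun y => Complex.exp (((φ y : ℂ) + Complex.I * (ψ y : ℂ)) / (h : ℂ)) * u y) i
      = fun y => Complex.exp (((φ y : ℂ) + Complex.I * (ψ y : ℂ)) / (h : ℂ)) *
          ((((pderivR n φ i y : ℂ) + Complex.I * (pderivR n ψ i y : ℂ)) / (h : ℂ)) * u y
            + pderivC n u i y) := by
    funext y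
    rw [pderivC_mul (hexp y) (hu1 y) i, pderivC_exp (hw y) i, pderivC_pair (hφ1 y) (hψ1 y) _ i]
    ring
  rw [hA]
  rw [pderivC_mul (g := fun y => ((pderivR n φ i y : ℂ) + Complex.I * (pderivR n ψ i y : ℂ)) / (h : ℂ)
        * u y + pderivC n u i y) (hexp x) (((hdw x).mul (hu1 x)).add (hui x)) i,
      pderivC_exp (hw x) i, pderivC_pair (hφ1 x) (hψ1 x) _ i,
      pderivC_add (f := fun y => ((pderivR n φ i y : ℂ) + Complex.I * (pderivR n ψ i y : ℂ))
        / (h : ℂ) * u y) ((hdw x).mul (hu1 x)) (hui x) i,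
      pderivC_mul (hdw x) (hu1 x) i,
      pderivC_pair (hφi x) (hψi x) _ i]
  ring

end Aux

/-- **Conjugated semiclassical Laplacian under the eikonal equations.**
If `φ, ψ` are `C²` and satisfy `Σᵢ(∂ᵢψ)² = Σᵢ(∂ᵢφ)²` and `Σᵢ ∂ᵢφ ∂ᵢψ = 0`, then for
`C²` functions `u` and `h > 0`,
`e^{−(φ+iψ)/h} h² Δ(e^{(φ+iψ)/h}u) = h² Δu + 2h T u`. -/
theorem conjugated_laplacian_eikonal (n : ℕ) (hn : 1 ≤ n)
    (φ ψ : EuclideanSpace ℝ (Fin n) → ℝ)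
    (hφ : ContDiff ℝ 2 φ) (hψ : ContDiff ℝ 2 ψ)
    (heik1 : ∀ x, ∑ i : Fin n, (pderivR n ψ i x) ^ 2 = ∑ i : Fin n, (pderivR n φ i x) ^ 2)
    (heik2 : ∀ x, ∑ i : Fin n, pderivR n φ i x * pderivR n ψ i x = 0)
    (h : ℝ) (hh : 0 < h)
    (u : EuclideanSpace ℝ (Fin n) → ℂ) (hu : ContDiff ℝ 2 u)
    (x : EuclideanSpace ℝ (Fin n)) :
    Complex.exp (-(((φ x : ℂ) + Complex.I * (ψ x : ℂ)) / (h : ℂ))) * (h : ℂ) ^ 2 *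
        laplacianC n
          (fun y => Complex.exp (((φ y : ℂ) + Complex.I * (ψ y : ℂ)) / (h : ℂ)) * u y) x =
      (h : ℂ) ^ 2 * laplacianC n u x + 2 * (h : ℂ) * transportT n φ ψ u x := by
  have hne : (h : ℂ) ≠ 0 := by exact_mod_cast hh.ne'
  have key : ∑ i : Fin n,
      ((pderivR n φ i x : ℂ) + Complex.I * (pderivR n ψ i x : ℂ)) ^ 2 = 0 := by
    have h1 : (∑ i : Fin n, ((pderivR n φ i x : ℂ)) ^ 2)
        = ∑ i : Fin n, ((pderivR n ψ i x : ℂ)) ^ 2 := by exact_mod_cast (heik1 x).symm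
    have h2 : (∑ i : Fin n, (pderivR n φ i x : ℂ) * (pderivR n ψ i x : ℂ)) = 0 := by
      exact_mod_cast heik2 x
    calc ∑ i : Fin n, ((pderivR n φ i x : ℂ) + Complex.I * (pderivR n ψ i x : ℂ)) ^ 2
        = ∑ i : Fin n, (((pderivR n φ i x : ℂ)) ^ 2 - ((pderivR n ψ i x : ℂ)) ^ 2
            + Complex.I * (2 * ((pderivR n φ i x : ℂ) * (pderivR n ψ i x : ℂ)))) :=
          Finset.sum_congr rfl fun i _ => by
            linear_combination ((pderivR n ψ i x : ℂ)) ^ 2 * Complex.I_sq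
      _ = 0 := by
          rw [Finset.sum_add_distrib, Finset.sum_sub_distrib, h1, ← Finset.mul_sum,
            ← Finset.mul_sum, h2]
          ring
  have e1 : (∑ i : Fin n, ((pderivR n (pderivR n φ i) i x : ℂ)
      + Complex.I * (pderivR n (pderivR n ψ i) i x : ℂ)))
      = (laplacianR n φ x : ℂ) + Complex.I * (laplacianR n ψ x : ℂ) := by
    simp only [laplacianR]
    push_cast
    rw [Finset.sum_add_distrib, ← Finset.mul_sum]
  simp only [laplacianC]
  rw [Finset.sum_congr rfl (fun i _ => second_deriv_formula hφ hψ hu i x), ← Finset.mul_sum]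
  have hkey : ∀ (a b c : ℂ), Complex.exp (-a) * b * (Complex.exp a * c) = b * c := by
    intro a b c
    rw [show Complex.exp (-a) * b * (Complex.exp a * c)
        = (Complex.exp (-a) * Complex.exp a) * (b * c) from by ring, ← Complex.exp_add]
    simp
  rw [hkey]
  calc (h : ℂ) ^ 2 * ∑ i : Fin n,
        ( (((pderivR n φ i x : ℂ) + Complex.I * (pderivR n ψ i x : ℂ)) / (h : ℂ)) ^ 2 * u x
        + (((pderivR n (pderivR n φ i) i x : ℂ)
            + Complex.I * (pderivR n (pderivR n ψ i) i x : ℂ)) / (h : ℂ)) * u x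
        + 2 * (((pderivR n φ i x : ℂ) + Complex.I * (pderivR n ψ i x : ℂ)) / (h : ℂ))
            * pderivC n u i x
        + pderivC n (pderivC n u i) i x )
      = ∑ i : Fin n,
        ( ((pderivR n φ i x : ℂ) + Complex.I * (pderivR n ψ i x : ℂ)) ^ 2 * u x
        + (h : ℂ) * (((pderivR n (pderivR n φ i) i x : ℂ)
            + Complex.I * (pderivR n (pderivR n ψ i) i x : ℂ)) * u x)
        + 2 * (h : ℂ) * (((pderivR n φ i x : ℂ) + Complex.I * (pderivR n ψ i x : ℂ))
            * pderivC n u i x)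
        + (h : ℂ) ^ 2 * pderivC n (pderivC n u i) i x ) := by
        rw [Finset.mul_sum]
        refine Finset.sum_congr rfl fun i _ => ?_
        field_simp
    _ = (∑ i : Fin n, ((pderivR n φ i x : ℂ) + Complex.I * (pderivR n ψ i x : ℂ)) ^ 2) * u x
        + (h : ℂ) * ((∑ i : Fin n, ((pderivR n (pderivR n φ i) i x : ℂ)
            + Complex.I * (pderivR n (pderivR n ψ i) i x : ℂ))) * u x)
        + 2 * (h : ℂ) * (∑ i : Fin n, ((pderivR n φ i x : ℂ)
            + Complex.I * (pderivR n ψ i x : ℂ)) * pderivC n u i x)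
        + (h : ℂ) ^ 2 * ∑ i : Fin n, pderivC n (pderivC n u i) i x := by
        simp only [Finset.sum_add_distrib, Finset.sum_mul, Finset.mul_sum]
        congr 1
        congr 1
        congr 1
        rw [← Finset.sum_add_distrib, Finset.sum_mul, Finset.mul_sum]
    _ = (h : ℂ) ^ 2 * laplacianC n u x + 2 * (h : ℂ) * transportT n φ ψ u x := by
        rw [key, e1]
        simp only [transportT, laplacianC]
        ring
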